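/- arXiv:2402.15902 — 5 statements merged into one kernel-verified Lean document; each statement's English description precedes it below -/
import Mathlib

section
/- With notation as above, the graph Gabor system {ψ_{ij}(t)}_{i,j=1}^N = {D_i(t)φ_{λ_j}}_{i,j=1}^N forms a frame for ℂ^N for all t ≥ 0; that is, there exist constants 0 < A ≤ B with A‖f‖² ≤ Σ_{i,j} |⟨f, ψ_{ij}(t)⟩|² ≤ B‖f‖² for all f ∈ ℂ^N. -/
open Matrix
set_option maxHeartbeats 1000000

lemma unitary_sum_sq {N : ℕ} (M : Matrix (Fin N) (Fin N) ℂ)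
    (hM : M ∈ Matrix.unitaryGroup (Fin N) ℂ) (g : Fin N → ℂ) :
    ∑ j, ‖(M *ᵥ g) j‖ ^ 2 = ∑ k, ‖g k‖ ^ 2 := by
  have hM' : Mᴴ * M = 1 := by
    have := Matrix.mem_unitaryGroup_iff'.mp hM
    rwa [Matrix.star_eq_conjTranspose] at this
  have h1 : star (M *ᵥ g) ⬝ᵥ (M *ᵥ g) = star g ⬝ᵥ g := by
    rw [Matrix.star_mulVec, Matrix.dotProduct_mulVec, Matrix.vecMul_vecMul, hM',
      Matrix.vecMul_one]
  have h2 : ∀ v : Fin N → ℂ, star v ⬝ᵥ v = ((∑ k, ‖v k‖ ^ 2 : ℝ) : ℂ) := by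
    intro v
    simp only [dotProduct, Pi.star_apply, RCLike.star_def]
    push_cast
    refine Finset.sum_congr rfl fun k _ => ?_
    rw [RCLike.conj_mul]
    norm_cast
  have := h1
  rw [h2, h2] at this
  exact_mod_cast this

/-- the graph Gabor system `{D_i(t) φ_j}` forms a frame for `ℂ^N`
for every `t ≥ 0`: there are `0 < A ≤ B` with
`A‖f‖² ≤ ∑_{i,j} |⟨f, ψ_{ij}(t)⟩|² ≤ B‖f‖²` for all `f`. -/
theorem graphGabor_is_frame {N : ℕ} (G : SimpleGraph (Fin N)) [DecidableRel G.Adj]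
    (hconn : G.Connected)
    (Φ : Matrix (Fin N) (Fin N) ℂ) (hΦ : Φ ∈ Matrix.unitaryGroup (Fin N) ℂ)
    (lam : Fin N → ℝ)
    (heig : ∀ l, G.lapMatrix ℂ *ᵥ (fun i => Φ i l) = (lam l : ℂ) • (fun i => Φ i l))
    (t : ℝ) (ht : 0 ≤ t)
    (H : Matrix (Fin N) (Fin N) ℂ)
    (hH : H = NormedSpace.exp ((-t : ℂ) • G.lapMatrix ℂ))
    (ψ : Fin N → Fin N → Fin N → ℂ)
    (hψ : ∀ i j, ψ i j = Matrix.diagonal (fun k => H k i) *ᵥ (fun k => Φ k j)) :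
    ∃ A B : ℝ, 0 < A ∧ A ≤ B ∧ ∀ f : Fin N → ℂ,
      A * ∑ k, ‖f k‖ ^ 2 ≤ ∑ i, ∑ j, ‖∑ k, f k * (starRingEnd ℂ) (ψ i j k)‖ ^ 2 ∧
      ∑ i, ∑ j, ‖∑ k, f k * (starRingEnd ℂ) (ψ i j k)‖ ^ 2 ≤ B * ∑ k, ‖f k‖ ^ 2 := by
  rcases Nat.eq_zero_or_pos N with hN | hN
  · subst hN
    exact ⟨1, 1, one_pos, le_refl 1, fun f => by simp⟩
  haveI : NeZero N := ⟨hN.ne'⟩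
  -- H is invertible
  have hunit : IsUnit H := hH ▸ Matrix.isUnit_exp _
  -- row sums
  set r : Fin N → ℝ := fun k => ∑ i, ‖H k i‖ ^ 2 with hr
  have hrpos : ∀ k, 0 < r k := by
    intro k
    have hne : ∃ i, H k i ≠ 0 := by
      by_contra hc
      push_neg at hc
      have hdet : H.det = 0 := Matrix.det_eq_zero_of_row_eq_zero k hc
      have := (Matrix.isUnit_iff_isUnit_det H).mp hunit
      rw [hdet] at this
      exact not_isUnit_zero this
    obtain ⟨i, hi⟩ := hne
    have h1 : (0:ℝ) < ‖H k i‖ ^ 2 := pow_pos (norm_pos_iff.mpr hi) 2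
    have h2 : ‖H k i‖ ^ 2 ≤ r k :=
      Finset.single_le_sum (f := fun i => ‖H k i‖ ^ 2) (fun i _ => sq_nonneg _)
        (Finset.mem_univ i)
    exact h1.trans_le h2
  have hΦ' : Φᴴ ∈ Matrix.unitaryGroup (Fin N) ℂ := by
    have h := Matrix.mem_unitaryGroup_iff.mp hΦ
    rw [Matrix.star_eq_conjTranspose] at h
    rw [Matrix.mem_unitaryGroup_iff', Matrix.star_eq_conjTranspose,
      Matrix.conjTranspose_conjTranspose]
    exact h
  have hne : (Finset.univ : Finset (Fin N)).Nonempty := Finset.univ_nonempty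
  have hA : 0 < Finset.univ.inf' hne r := (Finset.lt_inf'_iff hne).mpr fun k _ => hrpos k
  have hAB : Finset.univ.inf' hne r ≤ Finset.univ.sup' hne r := by
    obtain ⟨k, hk⟩ := hne
    exact le_trans (Finset.inf'_le r hk) (Finset.le_sup' r hk)
  refine ⟨Finset.univ.inf' hne r, Finset.univ.sup' hne r, hA, hAB, ?_⟩
  intro f
  have hψ' : ∀ i j k, ψ i j k = H k i * Φ k j := by
    intro i j k
    rw [hψ]
    exact Matrix.mulVec_diagonal _ _ _
  have key : ∑ i, ∑ j, ‖∑ k, f k * (starRingEnd ℂ) (ψ i j k)‖ ^ 2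
      = ∑ k, ‖f k‖ ^ 2 * r k := by
    have this1 : ∀ i, ∑ j, ‖∑ k, f k * (starRingEnd ℂ) (ψ i j k)‖ ^ 2
        = ∑ k, ‖f k‖ ^ 2 * ‖H k i‖ ^ 2 := by
      intro i
      have hform : ∀ j, ∑ k, f k * (starRingEnd ℂ) (ψ i j k)
          = (Φᴴ *ᵥ (fun k => f k * (starRingEnd ℂ) (H k i))) j := by
        intro j
        simp only [Matrix.mulVec, dotProduct, Matrix.conjTranspose_apply,
          RCLike.star_def]
        exact Finset.sum_congr rfl fun k _ => by rw [hψ' i j k, _root_.map_mul]; ring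
      calc ∑ j, ‖∑ k, f k * (starRingEnd ℂ) (ψ i j k)‖ ^ 2
          = ∑ j, ‖(Φᴴ *ᵥ (fun k => f k * (starRingEnd ℂ) (H k i))) j‖ ^ 2 :=
            Finset.sum_congr rfl fun j _ => by rw [hform j]
        _ = ∑ k, ‖f k * (starRingEnd ℂ) (H k i)‖ ^ 2 := unitary_sum_sq Φᴴ hΦ' _
        _ = ∑ k, ‖f k‖ ^ 2 * ‖H k i‖ ^ 2 :=
            Finset.sum_congr rfl fun k _ => by
              rw [norm_mul, mul_pow, RCLike.norm_conj]
    rw [Finset.sum_congr rfl fun i _ => this1 i, Finset.sum_comm]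
    exact Finset.sum_congr rfl fun k _ => by rw [← Finset.mul_sum]
  rw [key]
  constructor
  · rw [Finset.mul_sum]
    exact Finset.sum_le_sum fun k _ => by
      rw [mul_comm]
      exact mul_le_mul_of_nonneg_left (Finset.inf'_le r (Finset.mem_univ k))
        (sq_nonneg _)
  · rw [Finset.mul_sum]
    exact Finset.sum_le_sum fun k _ => by
      rw [mul_comm (Finset.univ.sup' hne r)]
      exact mul_le_mul_of_nonneg_left (Finset.le_sup' r (Finset.mem_univ k))
        (sq_nonneg _)
end

section
/- The graph Gabor system {D_i(t)φ_{λ_j}}_{i,j=1}^N is a tight frame for ℂ^N (at a given t ≥ 0) if and only if all columns of the heat kernel H_t have equal norm, i.e. ‖H_t(·, v_i)‖ = ‖H_t(·, v_j)‖ for all i, j. -/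
open Matrix

/-- the graph Gabor system `{D_i(t) φ_j}` is a tight frame for `ℂ^N`
at a given `t ≥ 0` if and only if all columns of the heat kernel have equal norm. -/
theorem graphGabor_tight_iff {N : ℕ} (G : SimpleGraph (Fin N)) [DecidableRel G.Adj]
    (hconn : G.Connected)
    (Φ : Matrix (Fin N) (Fin N) ℂ) (hΦ : Φ ∈ Matrix.unitaryGroup (Fin N) ℂ)
    (lam : Fin N → ℝ)
    (heig : ∀ l, G.lapMatrix ℂ *ᵥ (fun i => Φ i l) = (lam l : ℂ) • (fun i => Φ i l))
    (t : ℝ) (ht : 0 ≤ t)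
    (H : Matrix (Fin N) (Fin N) ℂ)
    (hH : H = NormedSpace.exp ((-t : ℂ) • G.lapMatrix ℂ))
    (ψ : Fin N → Fin N → Fin N → ℂ)
    (hψ : ∀ i j, ψ i j = Matrix.diagonal (fun k => H k i) *ᵥ (fun k => Φ k j)) :
    (∃ A : ℝ, 0 < A ∧ ∀ f : Fin N → ℂ,
        ∑ i, ∑ j, ‖∑ k, f k * (starRingEnd ℂ) (ψ i j k)‖ ^ 2 = A * ∑ k, ‖f k‖ ^ 2)
      ↔ ∀ i j : Fin N,
          Real.sqrt (∑ k, ‖H k i‖ ^ 2) = Real.sqrt (∑ k, ‖H k j‖ ^ 2) := by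
  classical
  -- ψ entries
  have hψ' : ∀ i j k, ψ i j k = H k i * Φ k j := by
    intro i j k; rw [hψ]; simp [Matrix.mulVec_diagonal]
  -- H is symmetric
  have hHsymm : H.IsSymm := by
    rw [hH]
    exact Matrix.IsSymm.exp (by
      rw [Matrix.IsSymm, Matrix.transpose_smul, (SimpleGraph.isSymm_lapMatrix (R := ℂ) (G := G))])
  have hsym : ∀ k i, H k i = H i k := by
    intro k i
    conv_lhs => rw [← hHsymm]
    rfl
  -- H is invertible (H * exp(tL) = 1)
  have hinv : H * NormedSpace.exp ((t : ℂ) • G.lapMatrix ℂ) = 1 := by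
    rw [hH, ← Matrix.exp_add_of_commute _ _ (by
      apply Commute.smul_left; apply Commute.smul_right; exact Commute.refl _)]
    have : (-t : ℂ) • G.lapMatrix ℂ + (t : ℂ) • G.lapMatrix ℂ = 0 := by
      rw [← add_smul]; norm_num
    rw [this, NormedSpace.exp_zero]
  -- unitary: rows of Φ are orthonormal
  have hrow : ∀ k l : Fin N, ∑ j, Φ l j * (starRingEnd ℂ) (Φ k j)
      = if l = k then 1 else 0 := by
    intro k l
    have h1 : Φ * star Φ = 1 := (Matrix.mem_unitaryGroup_iff.mp hΦ)
    have := congrFun (congrFun h1 l) k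
    simpa [Matrix.mul_apply, Matrix.one_apply, Matrix.star_apply] using this
  -- key identity
  have key : ∀ f : Fin N → ℂ,
      ∑ i, ∑ j, ‖∑ k, f k * (starRingEnd ℂ) (ψ i j k)‖ ^ 2
        = ∑ k, ‖f k‖ ^ 2 * (∑ i, ‖H k i‖ ^ 2) := by
    intro f
    have step : ∀ i, ∑ j, ‖∑ k, f k * (starRingEnd ℂ) (ψ i j k)‖ ^ 2
        = ∑ k, ‖f k‖ ^ 2 * ‖H k i‖ ^ 2 := by
      intro i
      set g : Fin N → ℂ := fun k => f k * (starRingEnd ℂ) (H k i) with hg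
      have hc : ∀ j, (∑ k, f k * (starRingEnd ℂ) (ψ i j k)) = (Φᴴ *ᵥ g) j := by
        intro j
        simp only [Matrix.mulVec, dotProduct, Matrix.conjTranspose_apply, hψ', hg]
        apply Finset.sum_congr rfl
        intro k _
        simp only [_root_.map_mul, starRingEnd_apply]
        ring
      -- complex identity via unitary
      have hcs : ∑ j, ((starRingEnd ℂ) ((Φᴴ *ᵥ g) j)) * (Φᴴ *ᵥ g) j
          = ∑ k, ((starRingEnd ℂ) (g k)) * g k := by
        have h1 : Φ * star Φ = 1 := (Matrix.mem_unitaryGroup_iff.mp hΦ)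
        calc ∑ j, ((starRingEnd ℂ) ((Φᴴ *ᵥ g) j)) * (Φᴴ *ᵥ g) j
            = star (Φᴴ *ᵥ g) ⬝ᵥ (Φᴴ *ᵥ g) := by
              simp [dotProduct, Pi.star_apply]
          _ = star g ⬝ᵥ ((Φ * Φᴴ) *ᵥ g) := by
              rw [Matrix.star_mulVec, Matrix.conjTranspose_conjTranspose,
                Matrix.dotProduct_mulVec, Matrix.dotProduct_mulVec, Matrix.vecMul_vecMul]
          _ = ∑ k, ((starRingEnd ℂ) (g k)) * g k := by
              rw [show Φ * Φᴴ = 1 from h1, Matrix.one_mulVec]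
              simp [dotProduct, Pi.star_apply]
      have hre : ∀ z : ℂ, ‖z‖ ^ 2 = ((starRingEnd ℂ) z * z).re := by
        intro z
        rw [mul_comm, Complex.mul_conj]
        simp [Complex.sq_norm]
      calc ∑ j, ‖∑ k, f k * (starRingEnd ℂ) (ψ i j k)‖ ^ 2
          = (∑ j, ((starRingEnd ℂ) ((Φᴴ *ᵥ g) j)) * (Φᴴ *ᵥ g) j).re := by
            rw [Complex.re_sum]
            exact Finset.sum_congr rfl fun j _ => by rw [hc j, hre]
        _ = (∑ k, ((starRingEnd ℂ) (g k)) * g k).re := by rw [hcs]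
        _ = ∑ k, ‖f k‖ ^ 2 * ‖H k i‖ ^ 2 := by
            rw [Complex.re_sum]
            apply Finset.sum_congr rfl
            intro k _
            rw [← hre, hg]
            simp [norm_mul, mul_pow]
    rw [Finset.sum_congr rfl fun i _ => step i, Finset.sum_comm]
    apply Finset.sum_congr rfl
    intro k _
    rw [Finset.mul_sum]
  -- convert row sums to column sums via symmetry
  have key' : ∀ f : Fin N → ℂ,
      ∑ i, ∑ j, ‖∑ k, f k * (starRingEnd ℂ) (ψ i j k)‖ ^ 2
        = ∑ k, ‖f k‖ ^ 2 * (∑ i, ‖H i k‖ ^ 2) := by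
    intro f
    rw [key f]
    apply Finset.sum_congr rfl
    intro k _
    congr 1
    exact Finset.sum_congr rfl fun i _ => by rw [hsym k i]
  constructor
  · rintro ⟨A, hA, hf⟩ i j
    have col : ∀ i : Fin N, (∑ k, ‖H k i‖ ^ 2) = A := by
      intro i
      have := hf (fun k => if k = i then 1 else 0)
      rw [key'] at this
      simpa [Finset.sum_ite_eq', apply_ite] using this
    rw [col i, col j]
  · intro hcol
    rcases Nat.eq_zero_or_pos N with hN | hN
    · refine ⟨1, one_pos, fun f => ?_⟩
      subst hN
      simp
    · set i0 : Fin N := ⟨0, hN⟩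
      set A : ℝ := ∑ k, ‖H k i0‖ ^ 2 with hA
      have hceq : ∀ i : Fin N, (∑ k, ‖H k i‖ ^ 2) = A := by
        intro i
        have h := hcol i i0
        have h1 : (0:ℝ) ≤ ∑ k, ‖H k i‖ ^ 2 :=
          Finset.sum_nonneg fun _ _ => sq_nonneg _
        have h2 : (0:ℝ) ≤ ∑ k, ‖H k i0‖ ^ 2 :=
          Finset.sum_nonneg fun _ _ => sq_nonneg _
        calc (∑ k, ‖H k i‖ ^ 2) = Real.sqrt (∑ k, ‖H k i‖ ^ 2) ^ 2 := by
              rw [Real.sq_sqrt h1]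
          _ = Real.sqrt (∑ k, ‖H k i0‖ ^ 2) ^ 2 := by rw [h]
          _ = A := by rw [Real.sq_sqrt h2]
      -- positivity: H ≠ 0
      have hApos : 0 < A := by
        rcases lt_or_eq_of_le (Finset.sum_nonneg
          (fun k (_ : k ∈ Finset.univ) => sq_nonneg ‖H k i0‖) : (0:ℝ) ≤ A) with h | h
        · exact h
        · exfalso
          have hz : ∀ k, H k i0 = 0 := by
            intro k
            have := (Finset.sum_eq_zero_iff_of_nonneg
              (fun k (_ : k ∈ Finset.univ) => sq_nonneg ‖H k i0‖)).mp h.symm k (Finset.mem_univ k)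
            have : ‖H k i0‖ = 0 := by
              nlinarith [norm_nonneg (H k i0)]
            simpa using this
          -- then row i0 of H is zero (by symmetry), contradicting H * E = 1
          have h1 := congrFun (congrFun hinv i0) i0
          rw [Matrix.mul_apply] at h1
          have : ∀ l, H i0 l = 0 := fun l => by rw [hsym i0 l]; exact hz l
          simp only [this, zero_mul, Finset.sum_const_zero, Matrix.one_apply_eq] at h1
          exact one_ne_zero h1.symm
      refine ⟨A, hApos, fun f => ?_⟩
      rw [key' f]
      rw [Finset.sum_congr rfl fun k _ => by rw [hceq k], ← Finset.sum_mul, mul_comm]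
end

section
/- Define the graph short-time Fourier transform V_t: ℂ^N → ℂ^{N×N} by (V_t f)(v_i, λ_j) = Σ_{k=1}^N f(v_k) H_t(v_i, v_k) conj(φ_{λ_j}(v_k)), and define W_t: ℂ^{N×N} → ℂ^N by (W_t F)(v_i) = ‖H_t(·, v_i)‖^{-2} Σ_{j=1}^N φ_j(v_i) Σ_{k=1}^N F(v_k, λ_j) H_t(v_k, v_i). Then W_t V_t f = f for every f ∈ ℂ^N, i.e. W_t is a left inverse of V_t. -/
open Matrix

/-- the operator `W_t` is a left inverse of the graph short-time
Fourier transform `V_t f (v_i, λ_j) = ∑_k f(v_k) H_t(v_i,v_k) φ_j(v_k)` (real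
orthonormal eigenbasis `Φ` of the Laplacian, real symmetric heat kernel). -/
theorem gstft_left_inverse {N : ℕ} (G : SimpleGraph (Fin N)) [DecidableRel G.Adj]
    (hconn : G.Connected)
    (Φ : Matrix (Fin N) (Fin N) ℝ) (hΦ : Φ ∈ Matrix.orthogonalGroup (Fin N) ℝ)
    (lam : Fin N → ℝ)
    (heig : ∀ l, G.lapMatrix ℝ *ᵥ (fun i => Φ i l) = lam l • (fun i => Φ i l))
    (t : ℝ) (ht : 0 ≤ t)
    (H : Matrix (Fin N) (Fin N) ℝ)
    (hH : H = NormedSpace.exp ((-t) • G.lapMatrix ℝ))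
    (V : (Fin N → ℝ) → Matrix (Fin N) (Fin N) ℝ)
    (hV : ∀ f i j, V f i j = ∑ k, f k * H i k * Φ k j)
    (W : Matrix (Fin N) (Fin N) ℝ → (Fin N → ℝ))
    (hW : ∀ F i, W F i = (∑ k, (H k i) ^ 2)⁻¹ * ∑ j, Φ i j * ∑ k, F k j * H k i) :
    ∀ f : Fin N → ℝ, W (V f) = f := by
  -- H is invertible, so each column is nonzero
  have hunit : IsUnit H := hH ▸ Matrix.isUnit_exp _
  have hcol : ∀ i, ∑ k, (H k i) ^ 2 ≠ 0 := by
    intro i hsum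
    have hz : ∀ k, H k i = 0 := by
      intro k
      have hnn : ∀ k ∈ Finset.univ, (0:ℝ) ≤ (H k i) ^ 2 := fun k _ => sq_nonneg _
      have := (Finset.sum_eq_zero_iff_of_nonneg hnn).mp hsum k (Finset.mem_univ k)
      exact pow_eq_zero_iff (two_ne_zero) |>.mp this
    have hinj : Function.Injective H.mulVec :=
      (Matrix.mulVec_injective_iff_isUnit).mpr hunit
    have : H *ᵥ (Pi.single i 1 : Fin N → ℝ) = H *ᵥ 0 := by
      funext k
      simp [Matrix.mulVec_single, hz k, Matrix.mulVec_zero]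
    have := hinj this
    simpa using congrFun this i
  -- orthogonality of rows of Φ
  have hΦΦ : ∀ i m, ∑ j, Φ i j * Φ m j = if i = m then 1 else 0 := by
    intro i m
    have h1 : Φ * star Φ = 1 := (Matrix.mem_orthogonalGroup_iff _ _).mp hΦ
    have := congrFun (congrFun h1 i) m
    simpa [Matrix.mul_apply, Matrix.one_apply, Matrix.star_eq_conjTranspose,
      Matrix.conjTranspose_apply] using this
  intro f
  funext i
  rw [hW]
  have key : ∑ j, Φ i j * ∑ k, V f k j * H k i = f i * ∑ k, (H k i) ^ 2 := by
    calc ∑ j, Φ i j * ∑ k, V f k j * H k i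
        = ∑ j, ∑ k, ∑ m, f m * H k m * Φ m j * H k i * Φ i j := by
          refine Finset.sum_congr rfl fun j _ => ?_
          rw [Finset.mul_sum]
          refine Finset.sum_congr rfl fun k _ => ?_
          rw [hV, Finset.sum_mul, Finset.mul_sum]
          exact Finset.sum_congr rfl fun m _ => by ring
      _ = ∑ k, ∑ m, f m * H k m * H k i * ∑ j, Φ i j * Φ m j := by
          rw [Finset.sum_comm]
          refine Finset.sum_congr rfl fun k _ => ?_
          rw [Finset.sum_comm]
          refine Finset.sum_congr rfl fun m _ => ?_
          rw [Finset.mul_sum]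
          exact Finset.sum_congr rfl fun j _ => by ring
      _ = ∑ k, f i * H k i * H k i := by
          refine Finset.sum_congr rfl fun k _ => ?_
          simp [hΦΦ, mul_ite]
      _ = f i * ∑ k, (H k i) ^ 2 := by
          rw [Finset.mul_sum]
          exact Finset.sum_congr rfl fun k _ => by ring
  rw [key]
  field_simp [hcol i]
end

section
/- If G is a finite, connected, vertex-transitive graph, then all columns of the heat kernel H_t = e^{-tL} have equal norm for every t ≥ 0; more precisely, for any vertices v_i, v_j there is a permutation matrix P commuting with H_t such that H_t(·, v_j) = P H_t(·, v_i). Consequently the graph Gabor system {D_i(t)φ_{λ_j}}_{i,j=1}^N is a tight frame for ℂ^N for every t ≥ 0. -/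
open Matrix


section Aux
variable {N : ℕ}

lemma perm_entry_lap (G : SimpleGraph (Fin N)) [DecidableRel G.Adj]
    (π : Equiv.Perm (Fin N)) (hπ : ∀ x y : Fin N, G.Adj x y ↔ G.Adj (π x) (π y))
    (a b : Fin N) : G.lapMatrix ℂ (π a) (π b) = G.lapMatrix ℂ a b := by
  have hdeg : ∀ a : Fin N, G.degree (π a) = G.degree a := by
    intro a
    rw [← SimpleGraph.card_neighborSet_eq_degree, ← SimpleGraph.card_neighborSet_eq_degree]
    refine Fintype.card_congr (Equiv.symm ?_)
    refine ⟨fun x => ⟨π x.1, ?_⟩, fun y => ⟨π.symm y.1, ?_⟩, ?_, ?_⟩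
    · exact (hπ a x.1).1 x.2
    · have := (hπ a (π.symm y.1)).2
      simp only [Equiv.apply_symm_apply] at this
      exact this y.2
    · intro x; ext; simp
    · intro y; ext; simp
  simp only [SimpleGraph.lapMatrix, SimpleGraph.degMatrix, Matrix.sub_apply,
    Matrix.diagonal_apply, SimpleGraph.adjMatrix_apply]
  congr 1
  · by_cases h : a = b
    · simp [h, hdeg]
    · rw [if_neg (fun hc => h (π.injective hc)), if_neg h]
  · exact if_congr (Iff.symm (hπ a b)) rfl rfl

def Pmat (π : Equiv.Perm (Fin N)) : Matrix (Fin N) (Fin N) ℂ :=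
  Matrix.of fun r s => if r = π s then 1 else 0

lemma Pmat_mul (π : Equiv.Perm (Fin N)) (M : Matrix (Fin N) (Fin N) ℂ) (r s : Fin N) :
    (Pmat π * M) r s = M (π.symm r) s := by
  simp only [Matrix.mul_apply, Pmat, Matrix.of_apply, ite_mul, one_mul, zero_mul]
  simp_rw [← Equiv.symm_apply_eq]
  simp

lemma mul_Pmat (π : Equiv.Perm (Fin N)) (M : Matrix (Fin N) (Fin N) ℂ) (r s : Fin N) :
    (M * Pmat π) r s = M r (π s) := by
  simp only [Matrix.mul_apply, Pmat, Matrix.of_apply, mul_ite, mul_one, mul_zero]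
  simp

lemma Pmat_mulVec (π : Equiv.Perm (Fin N)) (v : Fin N → ℂ) (r : Fin N) :
    (Pmat π *ᵥ v) r = v (π.symm r) := by
  simp only [Matrix.mulVec, dotProduct, Pmat, Matrix.of_apply, ite_mul, one_mul, zero_mul]
  simp_rw [← Equiv.symm_apply_eq]
  simp

lemma conj_mul_self (z : ℂ) : (starRingEnd ℂ) z * z = ((‖z‖^2 : ℝ) : ℂ) := by
  rw [mul_comm, Complex.mul_conj]
  simp [Complex.normSq_eq_norm_sq]

lemma unitary_col_energy (Φ : Matrix (Fin N) (Fin N) ℂ)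
    (hΦ : Φ ∈ Matrix.unitaryGroup (Fin N) ℂ) (g : Fin N → ℂ) :
    ∑ j, ‖∑ k, g k * (starRingEnd ℂ) (Φ k j)‖ ^ 2 = ∑ k, ‖g k‖ ^ 2 := by
  set u : Fin N → ℂ := Φᴴ *ᵥ g with hu
  have hu' : ∀ j, (∑ k, g k * (starRingEnd ℂ) (Φ k j)) = u j := by
    intro j
    rw [hu]
    simp only [Matrix.mulVec, dotProduct, Matrix.conjTranspose_apply]
    exact Finset.sum_congr rfl fun k _ => (mul_comm _ _).trans (by rfl)
  have key : ∑ j, ((‖u j‖ ^ 2 : ℝ) : ℂ) = ∑ k, ((‖g k‖ ^ 2 : ℝ) : ℂ) := by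
    simp_rw [← conj_mul_self]
    have lhs : ∑ j, (starRingEnd ℂ) (u j) * u j = star u ⬝ᵥ u := rfl
    have rhs : ∑ k, (starRingEnd ℂ) (g k) * g k = star g ⬝ᵥ g := rfl
    have h1 : Φ * Φᴴ = 1 := Matrix.mem_unitaryGroup_iff.mp hΦ
    rw [lhs, rhs, hu, Matrix.star_mulVec, Matrix.conjTranspose_conjTranspose,
      Matrix.dotProduct_mulVec, Matrix.vecMul_vecMul,
      h1, Matrix.vecMul_one]
  rw [← Complex.ofReal_sum, ← Complex.ofReal_sum] at key
  have := Complex.ofReal_injective key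
  simp_rw [hu']
  exact this

lemma Pmat_comm_exp (G : SimpleGraph (Fin N)) [DecidableRel G.Adj]
    (π : Equiv.Perm (Fin N)) (hπ : ∀ x y : Fin N, G.Adj x y ↔ G.Adj (π x) (π y))
    (t : ℝ) :
    Commute (Pmat π) (NormedSpace.exp ((-t : ℂ) • G.lapMatrix ℂ)) := by
  have hcomm : Commute (Pmat π) (G.lapMatrix ℂ) := by
    show _ = _
    ext r s
    rw [Pmat_mul, mul_Pmat]
    have := perm_entry_lap G π hπ (π.symm r) s
    rw [Equiv.apply_symm_apply] at this
    exact this.symm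
  exact (hcomm.smul_right ((-t : ℂ))).exp_right

lemma exp_lap_symm (G : SimpleGraph (Fin N)) [DecidableRel G.Adj] (t : ℝ) :
    (NormedSpace.exp ((-t : ℂ) • G.lapMatrix ℂ)).IsSymm := by
  refine Matrix.IsSymm.exp ?_
  show _ = _
  rw [Matrix.transpose_smul, G.isSymm_lapMatrix (R := ℂ)]

lemma exp_lap_isUnit (G : SimpleGraph (Fin N)) [DecidableRel G.Adj] (t : ℝ) :
    IsUnit (NormedSpace.exp ((-t : ℂ) • G.lapMatrix ℂ)) :=
  Matrix.isUnit_exp _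

end Aux


/-- for a finite connected vertex-transitive graph, for every
`t ≥ 0`: any two heat-kernel columns are related by a permutation matrix
commuting with `H_t`, all columns have equal norm, and the graph Gabor system
`{D_i(t) φ_j}` is a tight frame for `ℂ^N`. -/
theorem vertexTransitive_tight_frame {N : ℕ} (G : SimpleGraph (Fin N))
    [DecidableRel G.Adj] (hconn : G.Connected)
    (htrans : ∀ u v : Fin N, ∃ π : Equiv.Perm (Fin N),
      (∀ x y : Fin N, G.Adj x y ↔ G.Adj (π x) (π y)) ∧ π u = v)
    (Φ : Matrix (Fin N) (Fin N) ℂ) (hΦ : Φ ∈ Matrix.unitaryGroup (Fin N) ℂ)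
    (lam : Fin N → ℝ)
    (heig : ∀ l, G.lapMatrix ℂ *ᵥ (fun i => Φ i l) = (lam l : ℂ) • (fun i => Φ i l))
    (t : ℝ) (ht : 0 ≤ t)
    (H : Matrix (Fin N) (Fin N) ℂ)
    (hH : H = NormedSpace.exp ((-t : ℂ) • G.lapMatrix ℂ))
    (ψ : Fin N → Fin N → Fin N → ℂ)
    (hψ : ∀ i j, ψ i j = Matrix.diagonal (fun k => H k i) *ᵥ (fun k => Φ k j)) :
    (∀ i j : Fin N, ∃ P : Matrix (Fin N) (Fin N) ℂ,
      (∃ π : Equiv.Perm (Fin N), ∀ r s, P r s = if r = π s then 1 else 0) ∧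
      P * H = H * P ∧ (fun k => H k j) = P *ᵥ (fun k => H k i)) ∧
    (∀ i j : Fin N, ∑ k, ‖H k i‖ ^ 2 = ∑ k, ‖H k j‖ ^ 2) ∧
    (∃ A : ℝ, 0 < A ∧ ∀ f : Fin N → ℂ,
      ∑ i, ∑ j, ‖∑ k, f k * (starRingEnd ℂ) (ψ i j k)‖ ^ 2 = A * ∑ k, ‖f k‖ ^ 2) := by

  have part1 : ∀ i j : Fin N, ∃ P : Matrix (Fin N) (Fin N) ℂ,
      (∃ π : Equiv.Perm (Fin N), ∀ r s, P r s = if r = π s then 1 else 0) ∧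
      P * H = H * P ∧ (fun k => H k j) = P *ᵥ (fun k => H k i) := by
    intro i j
    obtain ⟨π, hπ, hui⟩ := htrans i j
    have hcomm : Pmat π * H = H * Pmat π := by
      rw [hH]; exact Pmat_comm_exp G π hπ t
    refine ⟨Pmat π, ⟨π, fun r s => rfl⟩, hcomm, ?_⟩
    funext r
    rw [Pmat_mulVec]
    show H r j = H (π.symm r) i
    have h2 : (Pmat π * H) r i = (H * Pmat π) r i := by rw [hcomm]
    rw [Pmat_mul, mul_Pmat] at h2
    rw [h2, hui]
  have part2 : ∀ i j : Fin N, ∑ k, ‖H k i‖ ^ 2 = ∑ k, ‖H k j‖ ^ 2 := by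
    intro i j
    obtain ⟨π, hπ, hui⟩ := htrans i j
    have hcomm : Pmat π * H = H * Pmat π := by
      rw [hH]; exact Pmat_comm_exp G π hπ t
    have hk : ∀ k, H k j = H (π.symm k) i := by
      intro k
      have h2 : (Pmat π * H) k i = (H * Pmat π) k i := by rw [hcomm]
      rw [Pmat_mul, mul_Pmat] at h2
      rw [h2, hui]
    calc ∑ k, ‖H k i‖ ^ 2 = ∑ k, ‖H (π.symm k) i‖ ^ 2 :=
          (Equiv.sum_comp π.symm (fun k => ‖H k i‖ ^ 2)).symm
      _ = ∑ k, ‖H k j‖ ^ 2 := by simp_rw [← hk]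
  refine ⟨part1, part2, ?_⟩
  have hsymm : H.IsSymm := by rw [hH]; exact exp_lap_symm G t
  rcases Nat.eq_zero_or_pos N with hN | hN
  · subst hN
    exact ⟨1, one_pos, fun f => by simp⟩
  set i0 : Fin N := ⟨0, hN⟩
  set A := ∑ k, ‖H k i0‖ ^ 2 with hA
  have hApos : 0 < A := by
    rcases (Finset.sum_nonneg fun k (_ : k ∈ Finset.univ) =>
        sq_nonneg ‖H k i0‖).lt_or_eq with h | h
    · exact h
    · exfalso
      have hz : ∀ k, H k i0 = 0 := by
        intro k
        have := (Finset.sum_eq_zero_iff_of_nonneg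
          (fun k (_ : k ∈ Finset.univ) => sq_nonneg ‖H k i0‖)).mp h.symm k (Finset.mem_univ k)
        have := pow_eq_zero_iff (n := 2) (by norm_num) |>.mp this
        simpa using this
      obtain ⟨B, hB⟩ := (by rw [hH]; exact exp_lap_isUnit G t : IsUnit H).exists_left_inv
      have h0 : (B * H) i0 i0 = 0 := by
        rw [Matrix.mul_apply]
        exact Finset.sum_eq_zero fun k _ => by rw [hz k, mul_zero]
      rw [hB, Matrix.one_apply_eq] at h0
      exact one_ne_zero h0
  refine ⟨A, hApos, fun f => ?_⟩
  have step1 : ∀ i, ∑ j, ‖∑ k, f k * (starRingEnd ℂ) (ψ i j k)‖ ^ 2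
      = ∑ k, ‖f k * (starRingEnd ℂ) (H k i)‖ ^ 2 := by
    intro i
    have := unitary_col_energy Φ hΦ (fun k => f k * (starRingEnd ℂ) (H k i))
    rw [← this]
    refine Finset.sum_congr rfl fun j _ => ?_
    have he : (∑ k, f k * (starRingEnd ℂ) (ψ i j k))
        = ∑ k, f k * (starRingEnd ℂ) (H k i) * (starRingEnd ℂ) (Φ k j) :=
      Finset.sum_congr rfl fun k _ => by
        rw [hψ, Matrix.mulVec_diagonal, _root_.map_mul, mul_assoc]
    rw [he]
  calc ∑ i, ∑ j, ‖∑ k, f k * (starRingEnd ℂ) (ψ i j k)‖ ^ 2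
      = ∑ i, ∑ k, ‖f k * (starRingEnd ℂ) (H k i)‖ ^ 2 :=
        Finset.sum_congr rfl fun i _ => step1 i
    _ = ∑ k, ∑ i, ‖f k‖ ^ 2 * ‖H k i‖ ^ 2 := by
        rw [Finset.sum_comm]
        refine Finset.sum_congr rfl fun k _ => Finset.sum_congr rfl fun i _ => ?_
        rw [norm_mul, RCLike.norm_conj, mul_pow]
    _ = ∑ k, ‖f k‖ ^ 2 * A := by
        refine Finset.sum_congr rfl fun k _ => ?_
        rw [← Finset.mul_sum]
        congr 1
        calc ∑ i, ‖H k i‖ ^ 2 = ∑ i, ‖H i k‖ ^ 2 := by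
              refine Finset.sum_congr rfl fun i _ => ?_
              rw [hsymm.apply]
          _ = A := part2 k i0
    _ = A * ∑ k, ‖f k‖ ^ 2 := by rw [← Finset.sum_mul, mul_comm]
end

section
/- If G is a connected strongly regular graph, then for every t ≥ 0 all columns of the heat kernel H_t = e^{-tL} have equal norm, and hence the graph Gabor system {D_i(t)φ_{λ_j}}_{i,j=1}^N is a tight frame for ℂ^N for every t ≥ 0. -/
open Matrix

section Aux
variable {N : ℕ}

lemma exp_mem_of_closed {S : Submodule ℂ (Matrix (Fin N) (Fin N) ℂ)}
    (hc : IsClosed (S : Set (Matrix (Fin N) (Fin N) ℂ)))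
    (hmul : ∀ X ∈ S, ∀ Y ∈ S, X * Y ∈ S) (h1 : (1 : Matrix (Fin N) (Fin N) ℂ) ∈ S)
    {X : Matrix (Fin N) (Fin N) ℂ} (hX : X ∈ S) :
    NormedSpace.exp X ∈ S := by
  letI : SeminormedRing (Matrix (Fin N) (Fin N) ℂ) := Matrix.linftyOpSemiNormedRing
  letI : NormedRing (Matrix (Fin N) (Fin N) ℂ) := Matrix.linftyOpNormedRing
  letI : NormedAlgebra ℂ (Matrix (Fin N) (Fin N) ℂ) := Matrix.linftyOpNormedAlgebra
  have hpow : ∀ n : ℕ, X ^ n ∈ S := by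
    intro n
    induction n with
    | zero => simpa using h1
    | succ n ih => rw [pow_succ]; exact hmul _ ih _ hX
  have hsum := NormedSpace.expSeries_summable' (𝕂 := ℂ) X
  rw [NormedSpace.exp_eq_tsum (𝕂 := ℂ)]
  refine hc.mem_of_tendsto hsum.hasSum.tendsto_sum_nat
    (Filter.Eventually.of_forall fun n => ?_)
  exact Submodule.sum_mem _ fun m _ => Submodule.smul_mem _ _ (hpow m)

end Aux

section Span
variable {N d a c : ℕ}

lemma srg_span_aux (G : SimpleGraph (Fin N)) [DecidableRel G.Adj]
    (hsrg : G.IsSRGWith N d a c) :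
    ∃ S : Submodule ℂ (Matrix (Fin N) (Fin N) ℂ),
      (G.lapMatrix ℂ ∈ S) ∧ (∀ X ∈ S, ∀ Y ∈ S, X * Y ∈ S) ∧
      ((1 : Matrix (Fin N) (Fin N) ℂ) ∈ S) ∧
      (IsClosed (S : Set (Matrix (Fin N) (Fin N) ℂ))) ∧
      (∀ M ∈ S, ∀ i j : Fin N, M i i = M j j) := by
  classical
  set A : Matrix (Fin N) (Fin N) ℂ := G.adjMatrix ℂ with hA
  set J : Matrix (Fin N) (Fin N) ℂ := Matrix.of (fun _ _ => (1 : ℂ)) with hJ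
  set s : Set (Matrix (Fin N) (Fin N) ℂ) := {1, A, J} with hs
  set S : Submodule ℂ (Matrix (Fin N) (Fin N) ℂ) := Submodule.span ℂ s with hS
  have h1 : (1 : Matrix (Fin N) (Fin N) ℂ) ∈ S := Submodule.subset_span (by simp [hs])
  have hAS : A ∈ S := Submodule.subset_span (by simp [hs])
  have hJS : J ∈ S := Submodule.subset_span (by simp [hs])
  -- products of generators
  have hAJ : A * J = (d : ℂ) • J := by
    ext i j
    simp [hA, hJ, SimpleGraph.adjMatrix_mul_apply, hsrg.regular i]
  have hJA : J * A = (d : ℂ) • J := by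
    ext i j
    simp [hA, hJ, SimpleGraph.mul_adjMatrix_apply, hsrg.regular j]
  have hJJ : J * J = (N : ℂ) • J := by
    ext i j
    simp [hJ, Matrix.mul_apply]
  have hCompl : Gᶜ.adjMatrix ℂ = J - 1 - A := by
    ext i j
    by_cases hij : i = j
    · subst hij; simp [hJ, hA]
    · by_cases hadj : G.Adj i j
      · simp [hJ, hA, hij, hadj, Matrix.one_apply, SimpleGraph.compl_adj]
      · simp [hJ, hA, hij, hadj, Matrix.one_apply, SimpleGraph.compl_adj]
  have hAA : A * A = (d : ℂ) • 1 + (a : ℂ) • A + (c : ℂ) • (J - 1 - A) := by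
    have := hsrg.matrix_eq (α := ℂ)
    rw [pow_two] at this
    rw [this, hCompl]
    simp only [hA, ← Nat.cast_smul_eq_nsmul ℂ]
  have hAAS : A * A ∈ S := by
    rw [hAA]
    exact Submodule.add_mem _ (Submodule.add_mem _ (Submodule.smul_mem _ _ h1)
      (Submodule.smul_mem _ _ hAS)) (Submodule.smul_mem _ _
      (Submodule.sub_mem _ (Submodule.sub_mem _ hJS h1) hAS))
  -- closure under multiplication
  have hgen : ∀ X ∈ s, ∀ Y ∈ s, X * Y ∈ S := by
    rintro X (rfl | rfl | rfl) Y (rfl | rfl | rfl)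
    · simpa using h1
    · simpa using hAS
    · simpa using hJS
    · simpa using hAS
    · exact hAAS
    · rw [hAJ]; exact Submodule.smul_mem _ _ hJS
    · simpa using hJS
    · rw [hJA]; exact Submodule.smul_mem _ _ hJS
    · rw [hJJ]; exact Submodule.smul_mem _ _ hJS
  have hmul : ∀ X ∈ S, ∀ Y ∈ S, X * Y ∈ S := by
    intro X hX
    induction hX using Submodule.span_induction with
    | mem X hXs =>
      intro Y hY
      induction hY using Submodule.span_induction with
      | mem Y hYs => exact hgen X hXs Y hYs
      | zero => simpa using Submodule.zero_mem S
      | add Y Z _ _ hY hZ => rw [mul_add]; exact Submodule.add_mem _ hY hZ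
      | smul r Y _ hY => rw [Matrix.mul_smul]; exact Submodule.smul_mem _ _ hY
    | zero => intro Y hY; simpa using Submodule.zero_mem S
    | add X Z _ _ hX hZ => intro Y hY; rw [add_mul]; exact Submodule.add_mem _ (hX Y hY) (hZ Y hY)
    | smul r X _ hX => intro Y hY; rw [Matrix.smul_mul]; exact Submodule.smul_mem _ _ (hX Y hY)
  -- Laplacian in S
  have hLS : G.lapMatrix ℂ ∈ S := by
    have hL : G.lapMatrix ℂ = (d : ℂ) • 1 - A := by
      ext i j
      by_cases hij : i = j
      · subst hij
        simp [SimpleGraph.lapMatrix, SimpleGraph.degMatrix, hA, hsrg.regular i,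
          Matrix.one_apply]
      · simp [SimpleGraph.lapMatrix, SimpleGraph.degMatrix, hA, hij,
          Matrix.one_apply, Matrix.diagonal_apply]
    rw [hL]
    exact Submodule.sub_mem _ (Submodule.smul_mem _ _ h1) hAS
  -- closedness
  have hfin : FiniteDimensional ℂ S := FiniteDimensional.span_of_finite ℂ (by
    simp only [hs]; exact (Set.finite_singleton _).insert _ |>.insert _)
  letI : SeminormedRing (Matrix (Fin N) (Fin N) ℂ) := Matrix.linftyOpSemiNormedRing
  letI : NormedRing (Matrix (Fin N) (Fin N) ℂ) := Matrix.linftyOpNormedRing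
  letI : NormedAlgebra ℂ (Matrix (Fin N) (Fin N) ℂ) := Matrix.linftyOpNormedAlgebra
  have hclosed : IsClosed (S : Set (Matrix (Fin N) (Fin N) ℂ)) :=
    Submodule.closed_of_finiteDimensional S
  -- constant diagonal
  have hdiag : ∀ M ∈ S, ∀ i j : Fin N, M i i = M j j := by
    intro M hM
    induction hM using Submodule.span_induction with
    | mem M hMs =>
      rcases hMs with rfl | rfl | rfl
      · intro i j; simp [Matrix.one_apply]
      · intro i j; simp [hA]
      · intro i j; simp [hJ]
    | zero => intro i j; simp
    | add X Y _ _ hX hY => intro i j; simp [Matrix.add_apply, hX i j, hY i j]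
    | smul r X _ hX => intro i j; simp [Matrix.smul_apply, hX i j]
  exact ⟨S, hLS, hmul, h1, hclosed, hdiag⟩

end Span

section Aux
variable {N d a c : ℕ}

lemma lap_star {N : ℕ} (G : SimpleGraph (Fin N)) [DecidableRel G.Adj] (i j : Fin N) :
    star (G.lapMatrix ℂ i j) = G.lapMatrix ℂ i j := by
  simp only [SimpleGraph.lapMatrix, Matrix.sub_apply, SimpleGraph.degMatrix,
    Matrix.diagonal_apply, SimpleGraph.adjMatrix_apply, star_sub, apply_ite (star : ℂ → ℂ)]
  simp

lemma star_mul_self_eq (z : ℂ) : star z * z = ((‖z‖ ^ 2 : ℝ) : ℂ) := by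
  rw [mul_comm, Complex.star_def, Complex.mul_conj']
  push_cast
  ring

end Aux


/-- for a connected strongly regular graph, for every `t ≥ 0` all
columns of the heat kernel `H_t = e^{-tL}` have equal norm, and hence the graph
Gabor system `{D_i(t) φ_j}` is a tight frame for `ℂ^N`. -/
theorem srg_tight_frame {N d a c : ℕ} (G : SimpleGraph (Fin N))
    [DecidableRel G.Adj] (hsrg : G.IsSRGWith N d a c) (hconn : G.Connected)
    (Φ : Matrix (Fin N) (Fin N) ℂ) (hΦ : Φ ∈ Matrix.unitaryGroup (Fin N) ℂ)
    (lam : Fin N → ℝ)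
    (heig : ∀ l, G.lapMatrix ℂ *ᵥ (fun i => Φ i l) = (lam l : ℂ) • (fun i => Φ i l))
    (t : ℝ) (ht : 0 ≤ t)
    (H : Matrix (Fin N) (Fin N) ℂ)
    (hH : H = NormedSpace.exp ((-t : ℂ) • G.lapMatrix ℂ))
    (ψ : Fin N → Fin N → Fin N → ℂ)
    (hψ : ∀ i j, ψ i j = Matrix.diagonal (fun k => H k i) *ᵥ (fun k => Φ k j)) :
    (∀ i j : Fin N, ∑ k, ‖H k i‖ ^ 2 = ∑ k, ‖H k j‖ ^ 2) ∧
    (∃ A : ℝ, 0 < A ∧ ∀ f : Fin N → ℂ,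
      ∑ i, ∑ j, ‖∑ k, f k * (starRingEnd ℂ) (ψ i j k)‖ ^ 2 = A * ∑ k, ‖f k‖ ^ 2) := by
  classical
  obtain ⟨S, hLS, hmul, h1, hclosed, hdiag⟩ := srg_span_aux G hsrg
  -- H ∈ S
  have hHS : H ∈ S := by
    rw [hH]
    exact exp_mem_of_closed hclosed hmul h1 (Submodule.smul_mem _ _ hLS)
  -- H is Hermitian
  have hLherm : ((-t : ℂ) • G.lapMatrix ℂ)ᴴ = (-t : ℂ) • G.lapMatrix ℂ := by
    have hstar : star (-t : ℂ) = (-t : ℂ) := by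
      simp [Complex.star_def, Complex.conj_ofReal]
    rw [Matrix.conjTranspose_smul, hstar]
    congr 1
    ext i j
    rw [Matrix.conjTranspose_apply, lap_star]
    exact (G.isSymm_lapMatrix (R := ℂ)).apply i j
  have hHerm : Hᴴ = H := by
    rw [hH, ← Matrix.exp_conjTranspose, hLherm]
  -- part 1
  have hHH : H * H ∈ S := hmul _ hHS _ hHS
  have part1 : ∀ i j : Fin N, ∑ k, ‖H k i‖ ^ 2 = ∑ k, ‖H k j‖ ^ 2 := by
    intro i j
    have key : ∀ i : Fin N, ((∑ k, ‖H k i‖ ^ 2 : ℝ) : ℂ) = (H * H) i i := by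
      intro i
      rw [Matrix.mul_apply]
      push_cast
      refine Finset.sum_congr rfl fun k _ => ?_
      have : H i k = star (H k i) := by
        conv_lhs => rw [← hHerm]
        simp [Matrix.conjTranspose_apply]
      rw [this, star_mul_self_eq, Complex.ofReal_pow]
    have := hdiag _ hHH i j
    have h2 := (key i).trans (this.trans (key j).symm)
    exact_mod_cast h2
  refine ⟨part1, ?_⟩
  -- H ≠ 0 since it is invertible
  have hinv : H * NormedSpace.exp ((t : ℂ) • G.lapMatrix ℂ) = 1 := by
    rw [hH, ← Matrix.exp_add_of_commute ((-t : ℂ) • G.lapMatrix ℂ)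
      ((t : ℂ) • G.lapMatrix ℂ) (((Commute.refl _).smul_left _).smul_right _), ← add_smul]
    norm_num
  rcases isEmpty_or_nonempty (Fin N) with hN | hN
  · exact ⟨1, one_pos, fun f => by simp⟩
  obtain ⟨i0⟩ := hN
  have hHne : H ≠ 0 := by
    intro h0
    rw [h0, zero_mul] at hinv
    have := congr_fun (congr_fun hinv i0) i0
    simp [Matrix.one_apply] at this
  obtain ⟨k0, j0, hk0⟩ : ∃ k j, H k j ≠ 0 := by
    by_contra h
    push_neg at h
    exact hHne (by ext k j; exact h k j)
  set A0 : ℝ := ∑ k, ‖H k i0‖ ^ 2 with hA0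
  have hA0pos : 0 < A0 := by
    have h1' : ‖H k0 j0‖ ^ 2 ≤ A0 := by
      calc ‖H k0 j0‖ ^ 2 ≤ ∑ k, ‖H k j0‖ ^ 2 :=
            Finset.single_le_sum (fun k _ => sq_nonneg ‖H k j0‖) (Finset.mem_univ k0)
        _ = A0 := part1 j0 i0
    have : (0:ℝ) < ‖H k0 j0‖ ^ 2 := pow_pos (norm_pos_iff.mpr hk0) 2
    linarith
  refine ⟨A0, hA0pos, fun f => ?_⟩
  -- unitarity of Φ, entrywise
  have hU : ∀ k k' : Fin N, ∑ j, Φ k' j * star (Φ k j) = if k' = k then (1:ℂ) else 0 := by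
    intro k k'
    have h2 := (Matrix.mem_unitaryGroup_iff.mp hΦ)
    have := congr_fun (congr_fun h2 k') k
    rw [Matrix.mul_apply] at this
    simpa [Matrix.one_apply, Matrix.conjTranspose_apply] using this
  -- entry formula for ψ
  have hψ' : ∀ i j k, ψ i j k = H k i * Φ k j := by
    intro i j k
    rw [hψ i j]
    simp [Matrix.mulVec, dotProduct, Matrix.diagonal_apply, Finset.sum_ite_eq,
      ite_mul]
  -- per-column computation
  have hcol : ∀ i : Fin N,
      ∑ j, ‖∑ k, f k * (starRingEnd ℂ) (ψ i j k)‖ ^ 2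
        = ∑ k, ‖f k‖ ^ 2 * ‖H k i‖ ^ 2 := by
    intro i
    set g : Fin N → ℂ := fun k => f k * star (H k i) with hg
    have hSij : ∀ j, ∑ k, f k * (starRingEnd ℂ) (ψ i j k) = ∑ k, g k * star (Φ k j) := by
      intro j
      refine Finset.sum_congr rfl fun k _ => ?_
      rw [hψ' i j k, hg]
      simp only [RingHom.coe_coe]
      push_cast
      rw [show (starRingEnd ℂ) (H k i * Φ k j) = star (H k i) * star (Φ k j) by
        simp [_root_.map_mul, Complex.star_def, mul_comm]]
      ring
    have hcomplex : ∑ j, (∑ k, g k * star (Φ k j)) * star (∑ k, g k * star (Φ k j))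
        = ∑ k, g k * star (g k) := by
      have expand : ∀ j : Fin N,
          (∑ k, g k * star (Φ k j)) * star (∑ k, g k * star (Φ k j))
            = ∑ k, ∑ k', (g k * star (g k')) * (star (Φ k j) * Φ k' j) := by
        intro j
        rw [star_sum, Finset.sum_mul_sum]
        refine Finset.sum_congr rfl fun k _ => Finset.sum_congr rfl fun k' _ => ?_
        simp only [StarMul.star_mul, star_star]
        ring
      calc ∑ j, (∑ k, g k * star (Φ k j)) * star (∑ k, g k * star (Φ k j))
          = ∑ j, ∑ k, ∑ k', (g k * star (g k')) * (star (Φ k j) * Φ k' j) := by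
            exact Finset.sum_congr rfl fun j _ => expand j
        _ = ∑ k, ∑ k', (g k * star (g k')) * (∑ j, star (Φ k j) * Φ k' j) := by
            rw [Finset.sum_comm]
            refine Finset.sum_congr rfl fun k _ => ?_
            rw [Finset.sum_comm]
            refine Finset.sum_congr rfl fun k' _ => ?_
            rw [Finset.mul_sum]
        _ = ∑ k, ∑ k', (g k * star (g k')) * (if k' = k then (1:ℂ) else 0) := by
            refine Finset.sum_congr rfl fun k _ => Finset.sum_congr rfl fun k' _ => ?_
            rw [show ∑ j, star (Φ k j) * Φ k' j = ∑ j, Φ k' j * star (Φ k j) from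
              Finset.sum_congr rfl fun j _ => mul_comm _ _, hU k k']
        _ = ∑ k, g k * star (g k) := by
            refine Finset.sum_congr rfl fun k _ => ?_
            simp [mul_ite, Finset.sum_ite_eq']
    have cast_eq : ((∑ j, ‖∑ k, f k * (starRingEnd ℂ) (ψ i j k)‖ ^ 2 : ℝ) : ℂ)
        = ((∑ k, ‖f k‖ ^ 2 * ‖H k i‖ ^ 2 : ℝ) : ℂ) := by
      push_cast
      calc ∑ j, ((‖∑ k, f k * (starRingEnd ℂ) (ψ i j k)‖ : ℂ)) ^ 2
          = ∑ j, (∑ k, g k * star (Φ k j)) * star (∑ k, g k * star (Φ k j)) := by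
            refine Finset.sum_congr rfl fun j _ => ?_
            rw [hSij j, mul_comm, star_mul_self_eq]
            push_cast; ring
        _ = ∑ k, g k * star (g k) := hcomplex
        _ = ∑ k, ((‖f k‖ : ℂ)) ^ 2 * ((‖H k i‖ : ℂ)) ^ 2 := by
            refine Finset.sum_congr rfl fun k _ => ?_
            rw [mul_comm (g k), star_mul_self_eq, hg]
            push_cast
            rw [norm_mul, norm_star]
            push_cast; ring
      
    exact_mod_cast cast_eq
  -- assemble
  calc ∑ i, ∑ j, ‖∑ k, f k * (starRingEnd ℂ) (ψ i j k)‖ ^ 2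
      = ∑ i, ∑ k, ‖f k‖ ^ 2 * ‖H k i‖ ^ 2 := Finset.sum_congr rfl fun i _ => hcol i
    _ = ∑ k, ‖f k‖ ^ 2 * (∑ i, ‖H k i‖ ^ 2) := by
        rw [Finset.sum_comm]
        exact Finset.sum_congr rfl fun k _ => by rw [Finset.mul_sum]
    _ = ∑ k, ‖f k‖ ^ 2 * A0 := by
        refine Finset.sum_congr rfl fun k _ => ?_
        congr 1
        have hrow : ∀ i, ‖H k i‖ = ‖H i k‖ := by
          intro i
          have : H k i = star (H i k) := by
            conv_lhs => rw [← hHerm]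
            simp [Matrix.conjTranspose_apply]
          rw [this, norm_star]
        calc ∑ i, ‖H k i‖ ^ 2 = ∑ i, ‖H i k‖ ^ 2 :=
              Finset.sum_congr rfl fun i _ => by rw [hrow i]
          _ = A0 := part1 k i0
    _ = A0 * ∑ k, ‖f k‖ ^ 2 := by rw [← Finset.sum_mul]; ring
end
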